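/- Let (Ω, P) be a probability space, M ≥ 1, and X_1, …, X_M independent random variables each taking values in {−1, 1}. Set p̄ = (1/M)·∑_{m=1}^{M} P(X_m = 1), and let k be an integer with 0 ≤ k < M. If 0 < p̄ < (M − k)/(2M), then P(∑_{m=1}^{M} X_m + k ≥ 0) ≤ [ ((M−k)(1−p̄)) / ((M+k)·p̄) ]^{k/2} · ( √((M−k)/(M+k)) + √((M+k)/(M−k)) )^{M} · ( p̄·(1−p̄) )^{M/2}. -/

import Mathlib

open MeasureTheory ProbabilityTheory

set_option maxHeartbeats 1000000

/-- Chernoff-type bound with an additive Byzantine offset `k`: if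
`X_1, …, X_M` are independent `{-1,1}`-valued random variables with
`p̄ = (1/M) ∑ P(X_m = 1)` satisfying `0 < p̄ < (M-k)/(2M)`, then
`P(∑ X_m + k ≥ 0) ≤ [((M-k)(1-p̄))/((M+k)p̄)]^(k/2) · (√((M-k)/(M+k)) + √((M+k)/(M-k)))^M ·
(p̄(1-p̄))^(M/2)`. -/
theorem stmt_6 {Ω : Type*} [MeasurableSpace Ω] (P : Measure Ω) [IsProbabilityMeasure P]
    (M : ℕ) (hM : 1 ≤ M)
    (X : Fin M → Ω → ℝ)
    (hmeas : ∀ m, Measurable (X m))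
    (hindep : iIndepFun X P)
    (hval : ∀ m ω, X m ω = 1 ∨ X m ω = -1)
    (pbar : ℝ)
    (hpbar : pbar = (1 / M) * ∑ m, (P {ω | X m ω = 1}).toReal)
    (k : ℕ) (hk : k < M)
    (hp0 : 0 < pbar) (hplt : pbar < ((M : ℝ) - k) / (2 * M)) :
    (P {ω | 0 ≤ (∑ m, X m ω) + k}).toReal ≤
      ((((M : ℝ) - k) * (1 - pbar)) / (((M : ℝ) + k) * pbar)) ^ ((k : ℝ) / 2) *
        (Real.sqrt (((M : ℝ) - k) / ((M : ℝ) + k)) +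
          Real.sqrt (((M : ℝ) + k) / ((M : ℝ) - k))) ^ M *
        (pbar * (1 - pbar)) ^ ((M : ℝ) / 2) := by
  classical
  have hMpos : (0:ℝ) < M := by exact_mod_cast Nat.lt_of_lt_of_le Nat.zero_lt_one hM
  have hkM : (k:ℝ) < M := by exact_mod_cast hk
  have hMk : (0:ℝ) < (M:ℝ) - k := by linarith
  have hMk' : (0:ℝ) < (M:ℝ) + k := by positivity
  have hkey : pbar * (2 * M) < (M:ℝ) - k := (lt_div_iff₀ (by positivity)).mp hplt
  have hp1 : pbar < 1 := by nlinarith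
  set A : ℝ := ((M:ℝ) - k) * (1 - pbar) with hA_def
  set B : ℝ := ((M:ℝ) + k) * pbar with hB_def
  have hA : 0 < A := mul_pos hMk (by linarith)
  have hB : 0 < B := mul_pos hMk' hp0
  have hBA : B < A := by nlinarith
  set s : ℝ := Real.sqrt (A / B) with hs_def
  have hABpos : 0 < A / B := div_pos hA hB
  have hs0 : 0 < s := Real.sqrt_pos.mpr hABpos
  have hs1 : 1 < s := by
    have : (1:ℝ) < A / B := (one_lt_div hB).mpr hBA
    calc (1:ℝ) = Real.sqrt 1 := Real.sqrt_one.symm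
    _ < s := Real.sqrt_lt_sqrt zero_le_one this
  set t : ℝ := Real.log s with ht_def
  have ht : 0 < t := Real.log_pos hs1
  have hexp : Real.exp t = s := Real.exp_log hs0
  -- probabilities
  set p : Fin M → ℝ := fun m => (P {ω | X m ω = 1}).toReal with hp_def
  have hp_nonneg : ∀ m, 0 ≤ p m := fun m => ENNReal.toReal_nonneg
  have hAm_meas : ∀ m, MeasurableSet {ω | X m ω = 1} := fun m =>
    (hmeas m) (measurableSet_singleton 1)
  have hp_le_one : ∀ m, p m ≤ 1 := fun m => by
    have := prob_le_one (μ := P) (s := {ω | X m ω = 1})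
    simpa [hp_def] using ENNReal.toReal_le_toReal (measure_ne_top _ _) (by simp) |>.mpr this
  -- mgf of each X m
  have hmgf : ∀ m, mgf (X m) P t = p m * s + (1 - p m) * s⁻¹ := by
    intro m
    have hfun : (fun ω => Real.exp (t * X m ω)) =
        fun ω => Set.indicator {ω | X m ω = 1} (fun _ => s) ω +
          Set.indicator {ω | X m ω = 1}ᶜ (fun _ => s⁻¹) ω := by
      funext ω
      rcases hval m ω with h | h
      · have h1 : ω ∈ {ω | X m ω = 1} := h
        have h2 : ω ∉ {ω | X m ω = 1}ᶜ := by simp [Set.mem_setOf_eq, h]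
        rw [Set.indicator_of_mem h1, Set.indicator_of_notMem h2, h]
        simp [hexp]
      · have h1 : ω ∉ {ω | X m ω = 1} := by norm_num [Set.mem_setOf_eq, h]
        have h2 : ω ∈ {ω | X m ω = 1}ᶜ := h1
        rw [Set.indicator_of_notMem h1, Set.indicator_of_mem h2, h]
        simp [Real.exp_neg, hexp]
    have hint1 : Integrable (({ω | X m ω = 1}).indicator fun _ => s) P :=
      (integrable_const s).indicator (hAm_meas m)
    have hint2 : Integrable (({ω | X m ω = 1}ᶜ).indicator fun _ => s⁻¹) P :=
      (integrable_const s⁻¹).indicator (hAm_meas m).compl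
    have hcompl : (P ({ω | X m ω = 1}ᶜ)).toReal = 1 - p m := by
      rw [prob_compl_eq_one_sub (hAm_meas m)]
      rw [ENNReal.toReal_sub_of_le (prob_le_one) (by simp)]
      simp [hp_def]
    rw [mgf, hfun, integral_add hint1 hint2, integral_indicator_const _ (hAm_meas m),
      integral_indicator_const _ (hAm_meas m).compl, measureReal_def, measureReal_def, hcompl]
    simp [hp_def, smul_eq_mul, mul_comm]
  -- integrability of exp(t * sum)
  have hsum_meas : Measurable fun ω => ∑ m, X m ω := by
    apply Finset.measurable_sum
    exact fun m _ => hmeas m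
  have hint_sum : Integrable (fun ω => Real.exp (t * ∑ m, X m ω)) P := by
    refine Integrable.mono' (integrable_const (Real.exp (t * M)))
      ((hsum_meas.const_mul t).exp.aestronglyMeasurable) (ae_of_all _ fun ω => ?_)
    rw [Real.norm_eq_abs, abs_of_pos (Real.exp_pos _)]
    apply Real.exp_le_exp.mpr
    apply mul_le_mul_of_nonneg_left _ ht.le
    calc ∑ m, X m ω ≤ ∑ _m : Fin M, (1:ℝ) := by
          apply Finset.sum_le_sum
          intro m _
          rcases hval m ω with h | h <;> rw [h] <;> norm_num
    _ = M := by simp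
  -- Chernoff
  have hset : {ω | 0 ≤ (∑ m, X m ω) + k} = {ω | -(k:ℝ) ≤ ∑ m, X m ω} := by
    ext ω; simp only [Set.mem_setOf_eq]; constructor <;> intro h <;> linarith
  have hchern := measure_ge_le_exp_mul_mgf (μ := P) (X := fun ω => ∑ m, X m ω)
    (-(k:ℝ)) ht.le hint_sum
  rw [hset]
  refine le_trans hchern ?_
  -- rewrite mgf of sum as product
  have hfun_sum : (fun ω => ∑ m, X m ω) = ∑ m, X m := by
    funext ω; simp
  rw [hfun_sum, hindep.mgf_sum hmeas Finset.univ]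
  simp_rw [hmgf]
  -- AM-GM
  have hz_nonneg : ∀ m, 0 ≤ p m * s + (1 - p m) * s⁻¹ := fun m => by
    have := hp_nonneg m; have := hp_le_one m
    have : (0:ℝ) ≤ 1 - p m := by linarith
    positivity
  have hsum_p : ∑ m, p m = M * pbar := by
    rw [hpbar]; field_simp [hp_def]
  have hsum_z : ∑ m, (p m * s + (1 - p m) * s⁻¹) = M * (pbar * s + (1 - pbar) * s⁻¹) := by
    rw [Finset.sum_add_distrib, ← Finset.sum_mul, ← Finset.sum_mul, hsum_p]
    have : ∑ m, (1 - p m) = (M:ℝ) - M * pbar := by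
      rw [Finset.sum_sub_distrib, hsum_p]; simp
    rw [this]; ring
  have hAMGM : ∏ m, (p m * s + (1 - p m) * s⁻¹) ≤ (pbar * s + (1 - pbar) * s⁻¹) ^ M := by
    have hw : ∑ _m : Fin M, (1:ℝ)/M = 1 := by
      simp; field_simp
    have hgm := Real.geom_mean_le_arith_mean_weighted Finset.univ (fun _ => (1:ℝ)/M)
      (fun m => p m * s + (1 - p m) * s⁻¹) (fun i _ => by positivity) hw
      (fun i _ => hz_nonneg i)
    have hrhs : ∑ m, (1:ℝ)/M * (p m * s + (1 - p m) * s⁻¹)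
        = pbar * s + (1 - pbar) * s⁻¹ := by
      rw [← Finset.mul_sum, hsum_z]
      field_simp
    rw [hrhs] at hgm
    have hG_nonneg : 0 ≤ ∏ m, (p m * s + (1 - p m) * s⁻¹) ^ ((1:ℝ)/M) :=
      Finset.prod_nonneg fun i _ => Real.rpow_nonneg (hz_nonneg i) _
    have hpow := pow_le_pow_left₀ hG_nonneg hgm M
    calc ∏ m, (p m * s + (1 - p m) * s⁻¹)
        = (∏ m, (p m * s + (1 - p m) * s⁻¹) ^ ((1:ℝ)/M)) ^ M := by
          rw [← Finset.prod_pow]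
          apply Finset.prod_congr rfl
          intro i _
          rw [← Real.rpow_natCast ((p i * s + (1 - p i) * s⁻¹) ^ ((1:ℝ)/M)) M,
            ← Real.rpow_mul (hz_nonneg i), one_div, inv_mul_cancel₀ (by positivity),
            Real.rpow_one]
    _ ≤ (pbar * s + (1 - pbar) * s⁻¹) ^ M := hpow
  have hfactor : pbar * s + (1 - pbar) * s⁻¹ =
      Real.sqrt (pbar * (1 - pbar)) *
        (Real.sqrt (((M:ℝ) - k) / ((M:ℝ) + k)) + Real.sqrt (((M:ℝ) + k) / ((M:ℝ) - k))) := by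
    have hval1 : pbar ^ 2 * (A / B) = pbar * (1 - pbar) * (((M:ℝ) - k) / ((M:ℝ) + k)) := by
      rw [hA_def, hB_def]
      field_simp
    have hval2 : (1 - pbar) ^ 2 * (A / B)⁻¹ =
        pbar * (1 - pbar) * (((M:ℝ) + k) / ((M:ℝ) - k)) := by
      rw [hA_def, hB_def]
      field_simp
    have h1 : pbar * s = Real.sqrt (pbar * (1 - pbar)) * Real.sqrt (((M:ℝ) - k) / ((M:ℝ) + k)) := by
      rw [← Real.sqrt_mul (by nlinarith : (0:ℝ) ≤ pbar * (1 - pbar)), ← hval1,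
        Real.sqrt_mul (sq_nonneg pbar), Real.sqrt_sq hp0.le, hs_def]
    have h2 : (1 - pbar) * s⁻¹ =
        Real.sqrt (pbar * (1 - pbar)) * Real.sqrt (((M:ℝ) + k) / ((M:ℝ) - k)) := by
      rw [← Real.sqrt_mul (by nlinarith : (0:ℝ) ≤ pbar * (1 - pbar)), ← hval2,
        Real.sqrt_mul (sq_nonneg (1 - pbar)), Real.sqrt_sq (by linarith : (0:ℝ) ≤ 1 - pbar),
        Real.sqrt_inv, hs_def]
    rw [mul_add, ← h1, ← h2]
  have hexp_k : Real.exp (-t * -(k:ℝ)) = (A / B) ^ ((k:ℝ)/2) := by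
    rw [neg_mul_neg, mul_comm, Real.exp_nat_mul, hexp, hs_def, Real.sqrt_eq_rpow,
      ← Real.rpow_natCast ((A/B) ^ ((1:ℝ)/2)) k, ← Real.rpow_mul hABpos.le]
    congr 1; ring
  have hpp : (pbar * (1 - pbar)) ^ ((M:ℝ)/2) = Real.sqrt (pbar * (1 - pbar)) ^ M := by
    rw [Real.sqrt_eq_rpow, ← Real.rpow_natCast ((pbar * (1-pbar)) ^ ((1:ℝ)/2)) M,
      ← Real.rpow_mul (by nlinarith : (0:ℝ) ≤ pbar * (1 - pbar))]
    congr 1; ring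
  calc Real.exp (-t * -(k:ℝ)) * ∏ m, (p m * s + (1 - p m) * s⁻¹)
      ≤ Real.exp (-t * -(k:ℝ)) * (pbar * s + (1 - pbar) * s⁻¹) ^ M := by
        apply mul_le_mul_of_nonneg_left hAMGM (Real.exp_pos _).le
  _ = (A / B) ^ ((k:ℝ)/2) *
        (Real.sqrt (((M:ℝ) - k) / ((M:ℝ) + k)) + Real.sqrt (((M:ℝ) + k) / ((M:ℝ) - k))) ^ M *
        (pbar * (1 - pbar)) ^ ((M:ℝ)/2) := by
      rw [hexp_k, hfactor, mul_pow, hpp]; ring
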